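/- Let n ≥ 1 and 1 ≤ t ≤ n, and set I = {t, t+1, ..., n-1} ⊆ [n-1]. The map sending A ∈ ASM^I(n) to the triangular array (m_{i,j})_{1 ≤ j ≤ i ≤ t-1}, where for each i ∈ [t-1] the row m_{i,1} < m_{i,2} < ⋯ < m_{i,i} lists the column indices c ∈ [n] with A_{1,c} + A_{2,c} + ⋯ + A_{i,c} = 1, is a bijection from ASM^I(n) onto the set of monotone triangles of size t-1 all of whose entries lie in {1, 2, ..., n}. -/

import Mathlib

/-- The rank (corner sum) matrix entry `r_A(i,j)` (1-based `i j`, zero when `i = 0` or `j = 0`). -/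
def rk (n : ℕ) (A : Matrix (Fin n) (Fin n) ℤ) (i j : ℕ) : ℤ :=
  ∑ p : Fin n, ∑ q : Fin n, if p.1 < i ∧ q.1 < j then A p q else 0

/-- `A` is an alternating sign matrix: entries in `{-1,0,1}`, the nonzero entries of each row
and column alternate in sign and sum to `1`; equivalently all partial row and column sums are
`0` or `1` and every full row and column sums to `1`. -/
def IsASM (n : ℕ) (A : Matrix (Fin n) (Fin n) ℤ) : Prop :=
  (∀ i j, A i j = -1 ∨ A i j = 0 ∨ A i j = 1) ∧
  (∀ i : Fin n, ∀ j : ℕ, j ≤ n →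
      (∑ q : Fin n, if q.1 < j then A i q else 0) = 0 ∨
      (∑ q : Fin n, if q.1 < j then A i q else 0) = 1) ∧
  (∀ j : Fin n, ∀ i : ℕ, i ≤ n →
      (∑ p : Fin n, if p.1 < i then A p j else 0) = 0 ∨
      (∑ p : Fin n, if p.1 < i then A p j else 0) = 1) ∧
  (∀ i : Fin n, (∑ q : Fin n, A i q) = 1) ∧
  (∀ j : Fin n, (∑ p : Fin n, A p j) = 1)

/-- `A ∈ ASM^I(n)`: `A` is an ASM and for every `i ∈ I` and `j ∈ [n]`,
`r_A(i,j) = r_A(i-1,j) + 1` or `r_A(i,j) = r_A(i+1,j)`. -/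
def InASMI (n : ℕ) (I : Finset ℕ) (A : Matrix (Fin n) (Fin n) ℤ) : Prop :=
  IsASM n A ∧ ∀ i ∈ I, ∀ j, 1 ≤ j → j ≤ n →
    rk n A i j = rk n A (i - 1) j + 1 ∨ rk n A i j = rk n A (i + 1) j

/-- Bruhat order on `ASM(n)`: `A ≤ B` iff `r_A(i,j) ≥ r_B(i,j)` for all `i,j ∈ [n]`. -/
def blE (n : ℕ) (A B : Matrix (Fin n) (Fin n) ℤ) : Prop :=
  ∀ i j, 1 ≤ i → i ≤ n → 1 ≤ j → j ≤ n → rk n B i j ≤ rk n A i j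

/-- Permutation matrix of `w`. -/
def permMatrix (n : ℕ) (w : Equiv.Perm (Fin n)) : Matrix (Fin n) (Fin n) ℤ :=
  Matrix.of fun i j => if w i = j then 1 else 0

/-- `w ∈ S_n^I`: `w(i) < w(i+1)` for all `i ∈ I` (indices 1-based). -/
def IsMinRep (n : ℕ) (I : Finset ℕ) (w : Equiv.Perm (Fin n)) : Prop :=
  ∀ p q : Fin n, (p.1 + 1) ∈ I → q.1 = p.1 + 1 → w p < w q

/-- Identity matrix. -/
def idMat (n : ℕ) : Matrix (Fin n) (Fin n) ℤ :=
  Matrix.of fun i j => if i = j then 1 else 0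

/-- The partial column sum `A_{1,c} + ⋯ + A_{i,c}` (1-based column index `c`). -/
def colSum (n : ℕ) (A : Matrix (Fin n) (Fin n) ℤ) (i c : ℕ) : ℤ :=
  ∑ p : Fin n, ∑ q : Fin n, if p.1 < i ∧ q.1 + 1 = c then A p q else 0

/-- A monotone triangle of size `m` with all entries in `{1, …, N}`, encoded as a function
`f : ℕ → ℕ → ℕ` (with `f i j = m_{i,j}` for `1 ≤ j ≤ i ≤ m`, and `f i j = 0` outside this
range, so that the encoding is unique). -/
def IsMT (m N : ℕ) (f : ℕ → ℕ → ℕ) : Prop :=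
  (∀ i j, 1 ≤ j → j ≤ i → i ≤ m → 1 ≤ f i j ∧ f i j ≤ N) ∧
  (∀ i j, 1 ≤ j → j < i → i ≤ m → f i j ≤ f (i - 1) j ∧ f (i - 1) j ≤ f i (j + 1)) ∧
  (∀ i j, 1 ≤ j → j < i → i ≤ m → f i j < f i (j + 1)) ∧
  (∀ i j, ¬(1 ≤ j ∧ j ≤ i ∧ i ≤ m) → f i j = 0)

/-- `f` is the triangle associated with `A`: for each `i ∈ [t-1]`, row `i` of `f` lists
exactly the columns `c` with `A_{1,c} + ⋯ + A_{i,c} = 1`. -/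
def Corr (n t : ℕ) (A : Matrix (Fin n) (Fin n) ℤ) (f : ℕ → ℕ → ℕ) : Prop :=
  ∀ i, 1 ≤ i → i ≤ t - 1 → ∀ c, 1 ≤ c → c ≤ n →
    (colSum n A i c = 1 ↔ ∃ j, 1 ≤ j ∧ j ≤ i ∧ f i j = c)
section B1
open Finset

theorem sum_lt_succ {n : ℕ} (g : Fin n → ℤ) (i : ℕ) (hi : i < n) :
    (∑ p : Fin n, if p.1 < i + 1 then g p else 0)
      = (∑ p : Fin n, if p.1 < i then g p else 0) + g ⟨i, hi⟩ := by
  have key : ∀ p : Fin n, (if p.1 < i + 1 then g p else 0)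
      = (if p.1 < i then g p else 0) + (if p = ⟨i, hi⟩ then g p else 0) := by
    intro p
    rcases eq_or_ne p ⟨i, hi⟩ with h | h
    · subst h; simp
    · have hne : p.1 ≠ i := fun hh => h (Fin.ext hh)
      have : (if p = ⟨i, hi⟩ then g p else 0) = 0 := by simp [h]
      rw [this, add_zero]
      split_ifs with h1 h2 h2 <;> first | rfl | omega
  rw [Finset.sum_congr rfl fun p _ => key p, Finset.sum_add_distrib,
    Finset.sum_ite_eq' Finset.univ ⟨i, hi⟩ g]
  simp

theorem rk_eq_sum (n : ℕ) (A : Matrix (Fin n) (Fin n) ℤ) (i j : ℕ) :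
    rk n A i j = ∑ p : Fin n,
      if p.1 < i then (∑ q : Fin n, if q.1 < j then A p q else 0) else 0 := by
  unfold rk
  refine Finset.sum_congr rfl fun p _ => ?_
  split_ifs with h
  · exact Finset.sum_congr rfl fun q _ => by simp [h]
  · simp [h]

theorem rk_zero_left (n : ℕ) (A : Matrix (Fin n) (Fin n) ℤ) (j : ℕ) :
    rk n A 0 j = 0 := by simp [rk_eq_sum]

theorem rk_zero_right (n : ℕ) (A : Matrix (Fin n) (Fin n) ℤ) (i : ℕ) :
    rk n A i 0 = 0 := by unfold rk; simp

theorem rk_succ_row (n : ℕ) (A : Matrix (Fin n) (Fin n) ℤ) (i : ℕ) (hi : i < n) (j : ℕ) :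
    rk n A (i+1) j = rk n A i j + ∑ q : Fin n, (if q.1 < j then A ⟨i, hi⟩ q else 0) := by
  rw [rk_eq_sum, rk_eq_sum, sum_lt_succ _ i hi]

theorem rk_transpose (n : ℕ) (A : Matrix (Fin n) (Fin n) ℤ) (i j : ℕ) :
    rk n A.transpose i j = rk n A j i := by
  unfold rk
  rw [Finset.sum_comm]
  exact Finset.sum_congr rfl fun p _ => Finset.sum_congr rfl fun q _ => by
    rw [Matrix.transpose_apply]
    exact if_congr (and_comm) rfl rfl

theorem rk_succ_col (n : ℕ) (A : Matrix (Fin n) (Fin n) ℤ) (i j : ℕ) (hj : j < n) :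
    rk n A i (j+1) = rk n A i j + ∑ p : Fin n, (if p.1 < i then A p ⟨j, hj⟩ else 0) := by
  rw [← rk_transpose n A (j+1) i, ← rk_transpose n A j i, rk_succ_row n _ j hj i]
  rfl

end B1
section B2

variable {n : ℕ} {A : Matrix (Fin n) (Fin n) ℤ}

theorem isASM_transpose (hA : IsASM n A) : IsASM n A.transpose := by
  obtain ⟨h1, h2, h3, h4, h5⟩ := hA
  exact ⟨fun i j => h1 j i, fun i j hj => h3 i j hj, fun j i hi => h2 j i hi,
    fun i => h5 i, fun j => h4 j⟩

theorem rk_row_step (hA : IsASM n A) {i j : ℕ} (hi : i < n) (hj : j ≤ n) :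
    rk n A (i+1) j = rk n A i j ∨ rk n A (i+1) j = rk n A i j + 1 := by
  rw [rk_succ_row n A i hi j]
  rcases hA.2.1 ⟨i, hi⟩ j hj with h | h <;> rw [h] <;> simp

theorem rk_col_step (hA : IsASM n A) {i j : ℕ} (hj : j < n) (hi : i ≤ n) :
    rk n A i (j+1) = rk n A i j ∨ rk n A i (j+1) = rk n A i j + 1 := by
  have := rk_row_step (isASM_transpose hA) hj hi
  rwa [rk_transpose, rk_transpose] at this

theorem rk_last_col (hA : IsASM n A) {i : ℕ} (hi : i ≤ n) : rk n A i n = i := by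
  induction i with
  | zero => simpa using rk_zero_left n A n
  | succ k ih =>
    have hk : k < n := by omega
    rw [rk_succ_row n A k hk n, ih (le_of_lt hk)]
    have : (∑ q : Fin n, if q.1 < n then A ⟨k, hk⟩ q else 0) = ∑ q : Fin n, A ⟨k, hk⟩ q := by
      refine Finset.sum_congr rfl fun q _ => ?_
      simp [q.isLt]
    rw [this, hA.2.2.2.1 ⟨k, hk⟩]
    push_cast; ring

theorem rk_last_row (hA : IsASM n A) {j : ℕ} (hj : j ≤ n) : rk n A n j = j := by
  have := rk_last_col (isASM_transpose hA) hj
  rwa [rk_transpose] at this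

theorem rk_mono_row (hA : IsASM n A) {i i' j : ℕ} (h : i ≤ i') (hi' : i' ≤ n) (hj : j ≤ n) :
    rk n A i j ≤ rk n A i' j ∧ rk n A i' j ≤ rk n A i j + (i' - i : ℕ) := by
  induction i' with
  | zero => simp_all
  | succ k ih =>
    rcases Nat.lt_or_ge i (k+1) with hlt | hge
    · have hik : i ≤ k := by omega
      have hkn : k < n := by omega
      obtain ⟨ha, hb⟩ := ih hik (by omega)
      have hstep := rk_row_step hA hkn hj
      have hc : ((k + 1 - i : ℕ) : ℤ) = ((k - i : ℕ) : ℤ) + 1 := by omega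
      constructor
      · rcases hstep with h' | h' <;> omega
      · rcases hstep with h' | h' <;> omega
    · have : i = k + 1 := by omega
      subst this; simp

theorem rk_mono_col (hA : IsASM n A) {i j j' : ℕ} (h : j ≤ j') (hj' : j' ≤ n) (hi : i ≤ n) :
    rk n A i j ≤ rk n A i j' ∧ rk n A i j' ≤ rk n A i j + (j' - j : ℕ) := by
  have := rk_mono_row (isASM_transpose hA) h hj' hi
  rwa [rk_transpose, rk_transpose] at this

theorem rk_nonneg (hA : IsASM n A) {i j : ℕ} (hi : i ≤ n) (hj : j ≤ n) : 0 ≤ rk n A i j := by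
  have := (rk_mono_row hA (Nat.zero_le i) hi hj).1
  rwa [rk_zero_left] at this

theorem rk_le_i (hA : IsASM n A) {i j : ℕ} (hi : i ≤ n) (hj : j ≤ n) : rk n A i j ≤ i := by
  have := (rk_mono_col hA hj le_rfl hi).1
  have h2 := rk_last_col hA hi
  omega

theorem rk_le_j (hA : IsASM n A) {i j : ℕ} (hi : i ≤ n) (hj : j ≤ n) : rk n A i j ≤ j := by
  have := (rk_mono_row hA hi le_rfl hj).1
  have h2 := rk_last_row hA hj
  omega

theorem rk_lb_col (hA : IsASM n A) {i j : ℕ} (hi : i ≤ n) (hj : j ≤ n) :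
    (i : ℤ) - (n - j : ℕ) ≤ rk n A i j := by
  have := (rk_mono_col hA hj le_rfl hi).2
  have h2 := rk_last_col hA hi
  omega

theorem rk_lb_row (hA : IsASM n A) {i j : ℕ} (hi : i ≤ n) (hj : j ≤ n) :
    (j : ℤ) - (n - i : ℕ) ≤ rk n A i j := by
  have := (rk_mono_row hA hi le_rfl hj).2
  have h2 := rk_last_row hA hj
  omega

theorem entry_eq_rk (A : Matrix (Fin n) (Fin n) ℤ) (p q : Fin n) :
    A p q = rk n A (p+1) (q+1) - rk n A p (q+1) - (rk n A (p+1) q - rk n A p q) := by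
  have h1 := rk_succ_row n A p.1 p.isLt (q.1+1)
  have h2 := rk_succ_row n A p.1 p.isLt q.1
  have h3 := sum_lt_succ (fun q' : Fin n => A p q') q.1 q.isLt
  have hp : (⟨p.1, p.isLt⟩ : Fin n) = p := rfl
  have hq : (⟨q.1, q.isLt⟩ : Fin n) = q := rfl
  rw [hp] at h1 h2
  rw [hq] at h3
  omega

theorem ext_of_rk {A B : Matrix (Fin n) (Fin n) ℤ}
    (h : ∀ i j, i ≤ n → j ≤ n → rk n A i j = rk n B i j) : A = B := by
  ext p q
  rw [entry_eq_rk A p q, entry_eq_rk B p q,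
    h (p+1) (q+1) p.isLt q.isLt, h p (q+1) (le_of_lt p.isLt) q.isLt,
    h (p+1) q p.isLt (le_of_lt q.isLt), h p q (le_of_lt p.isLt) (le_of_lt q.isLt)]

end B2
section B3

def matOfR (n : ℕ) (R : ℕ → ℕ → ℤ) : Matrix (Fin n) (Fin n) ℤ :=
  Matrix.of fun p q => R (p+1) (q+1) - R p (q+1) - R (p+1) q + R p q

def GoodR (n : ℕ) (R : ℕ → ℕ → ℤ) : Prop :=
  (∀ c, c ≤ n → R 0 c = 0) ∧ (∀ i, i ≤ n → R i 0 = 0) ∧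
  (∀ i, i < n → ∀ c, c ≤ n → R (i+1) c = R i c ∨ R (i+1) c = R i c + 1) ∧
  (∀ c, c < n → ∀ i, i ≤ n → R i (c+1) = R i c ∨ R i (c+1) = R i c + 1) ∧
  (∀ i, i ≤ n → R i n = i) ∧ (∀ c, c ≤ n → R n c = c)

variable {n : ℕ} {R : ℕ → ℕ → ℤ}

theorem rowpartial_matOfR (hR : GoodR n R) {i : ℕ} (hi : i < n) {j : ℕ} (hj : j ≤ n) :
    (∑ q : Fin n, if q.1 < j then matOfR n R ⟨i, hi⟩ q else 0) = R (i+1) j - R i j := by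
  induction j with
  | zero =>
    simp [hR.2.1 (i+1) hi, hR.2.1 i (le_of_lt hi)]
  | succ k ih =>
    have hk : k < n := by omega
    rw [sum_lt_succ (fun q : Fin n => matOfR n R ⟨i, hi⟩ q) k hk, ih (by omega)]
    show R (i+1) k - R i k + (R (i+1) (k+1) - R i (k+1) - R (i+1) k + R i k) = _
    ring

theorem colpartial_matOfR (hR : GoodR n R) {j : ℕ} (hj : j < n) {i : ℕ} (hi : i ≤ n) :
    (∑ p : Fin n, if p.1 < i then matOfR n R p ⟨j, hj⟩ else 0) = R i (j+1) - R i j := by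
  induction i with
  | zero =>
    simp [hR.1 (j+1) hj, hR.1 j (le_of_lt hj)]
  | succ k ih =>
    have hk : k < n := by omega
    rw [sum_lt_succ (fun p : Fin n => matOfR n R p ⟨j, hj⟩) k hk, ih (by omega)]
    show R k (j+1) - R k j + (R (k+1) (j+1) - R k (j+1) - R (k+1) j + R k j) = _
    ring

theorem rk_matOfR (hR : GoodR n R) {i j : ℕ} (hi : i ≤ n) (hj : j ≤ n) :
    rk n (matOfR n R) i j = R i j := by
  induction i with
  | zero => rw [rk_zero_left, hR.1 j hj]
  | succ k ih =>
    have hk : k < n := by omega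
    rw [rk_succ_row n _ k hk j, ih (by omega), rowpartial_matOfR hR hk hj]
    ring

theorem isASM_matOfR (hR : GoodR n R) : IsASM n (matOfR n R) := by
  obtain ⟨h00, h0, hrow, hcol, hln, hnc⟩ := hR
  refine ⟨?_, ?_, ?_, ?_, ?_⟩
  · intro p q
    have e1 := hrow p.1 p.isLt (q.1+1) q.isLt
    have e2 := hrow p.1 p.isLt q.1 (le_of_lt q.isLt)
    show matOfR n R p q = -1 ∨ matOfR n R p q = 0 ∨ matOfR n R p q = 1
    have : matOfR n R p q = R (p+1) (q+1) - R p (q+1) - R (p+1) q + R p q := rfl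
    omega
  · intro i j hj
    have : (⟨i.1, i.isLt⟩ : Fin n) = i := rfl
    rw [← this, rowpartial_matOfR ⟨h00, h0, hrow, hcol, hln, hnc⟩ i.isLt hj]
    have := hrow i.1 i.isLt j hj
    omega
  · intro j i hi
    have : (⟨j.1, j.isLt⟩ : Fin n) = j := rfl
    rw [← this, colpartial_matOfR ⟨h00, h0, hrow, hcol, hln, hnc⟩ j.isLt hi]
    have := hcol j.1 j.isLt i hi
    omega
  · intro i
    have h1 : (∑ q : Fin n, matOfR n R i q)
        = ∑ q : Fin n, if q.1 < n then matOfR n R i q else 0 := by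
      refine Finset.sum_congr rfl fun q _ => ?_
      simp [q.isLt]
    have : (⟨i.1, i.isLt⟩ : Fin n) = i := rfl
    rw [h1, ← this, rowpartial_matOfR ⟨h00, h0, hrow, hcol, hln, hnc⟩ i.isLt le_rfl,
      hln (i.1+1) i.isLt, hln i.1 (le_of_lt i.isLt)]
    push_cast; ring
  · intro j
    have h1 : (∑ p : Fin n, matOfR n R p j)
        = ∑ p : Fin n, if p.1 < n then matOfR n R p j else 0 := by
      refine Finset.sum_congr rfl fun p _ => ?_
      simp [p.isLt]
    have : (⟨j.1, j.isLt⟩ : Fin n) = j := rfl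
    rw [h1, ← this, colpartial_matOfR ⟨h00, h0, hrow, hcol, hln, hnc⟩ j.isLt le_rfl,
      hnc (j.1+1) j.isLt, hnc j.1 (le_of_lt j.isLt)]
    push_cast; ring

end B3
section B4

/-- number of entries of row `i` of `f` that are `≤ c` -/
def rf (f : ℕ → ℕ → ℕ) (i c : ℕ) : ℕ :=
  ((Finset.Icc 1 i).filter (fun j => f i j ≤ c)).card

variable {m N : ℕ} {f : ℕ → ℕ → ℕ}

theorem mt_gap (hf : IsMT m N f) {i j j' : ℕ} (h1 : 1 ≤ j) (h2 : j ≤ j') (h3 : j' ≤ i)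
    (h4 : i ≤ m) : f i j + (j' - j) ≤ f i j' := by
  induction j' with
  | zero => omega
  | succ k ih =>
    rcases Nat.lt_or_ge j (k+1) with hlt | hge
    · have hk := ih (by omega) (by omega)
      have := hf.2.2.1 i k (by omega) (by omega) h4
      omega
    · have : j = k + 1 := by omega
      subst this; omega

theorem mt_mono (hf : IsMT m N f) {i j j' : ℕ} (h1 : 1 ≤ j) (h2 : j ≤ j') (h3 : j' ≤ i)
    (h4 : i ≤ m) : f i j ≤ f i j' := by
  have := mt_gap hf h1 h2 h3 h4; omega

theorem rf_le (hf : IsMT m N f) {i : ℕ} (c : ℕ) (h4 : i ≤ m) : rf f i c ≤ i := by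
  have := Finset.card_filter_le (Finset.Icc 1 i) (fun j => f i j ≤ c)
  simpa [rf] using this

theorem rf_char (hf : IsMT m N f) {i c j : ℕ} (h1 : 1 ≤ j) (h3 : j ≤ i) (h4 : i ≤ m) :
    f i j ≤ c ↔ j ≤ rf f i c := by
  constructor
  · intro h
    have hsub : Finset.Icc 1 j ⊆ (Finset.Icc 1 i).filter (fun j' => f i j' ≤ c) := by
      intro j' hj'
      simp only [Finset.mem_Icc] at hj'
      refine Finset.mem_filter.2 ⟨Finset.mem_Icc.2 ⟨hj'.1, le_trans hj'.2 h3⟩, ?_⟩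
      exact le_trans (mt_mono hf hj'.1 hj'.2 h3 h4) h
    have := Finset.card_le_card hsub
    simpa [rf] using this
  · intro h
    by_contra hc
    push_neg at hc
    have hsub : (Finset.Icc 1 i).filter (fun j' => f i j' ≤ c) ⊆ Finset.Icc 1 (j-1) := by
      intro j' hj'
      obtain ⟨hj'1, hj'2⟩ := Finset.mem_filter.1 hj'
      simp only [Finset.mem_Icc] at hj'1 ⊢
      refine ⟨hj'1.1, ?_⟩
      by_contra hge
      push_neg at hge
      have := mt_mono hf h1 (by omega) hj'1.2 h4
      omega
    have := Finset.card_le_card hsub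
    simp only [Nat.card_Icc] at this
    unfold rf at h
    omega

theorem rf_zero (hf : IsMT m N f) {i : ℕ} (h4 : i ≤ m) : rf f i 0 = 0 := by
  unfold rf
  rw [Finset.card_eq_zero, Finset.filter_eq_empty_iff]
  intro j hj
  simp only [Finset.mem_Icc] at hj
  have := (hf.1 i j hj.1 hj.2 h4).1
  omega

theorem rf_full (hf : IsMT m N f) {i c : ℕ} (h4 : i ≤ m) (hc : N ≤ c) : rf f i c = i := by
  unfold rf
  rw [Finset.filter_true_of_mem, Nat.card_Icc]
  · omega
  · intro j hj
    simp only [Finset.mem_Icc] at hj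
    have := (hf.1 i j hj.1 hj.2 h4).2
    omega

theorem rf_le_c (hf : IsMT m N f) {i c : ℕ} (h4 : i ≤ m) : rf f i c ≤ c := by
  set k := rf f i c with hk
  rcases Nat.eq_zero_or_pos k with h | h
  · omega
  · have hki : k ≤ i := rf_le hf c h4
    have h1 : f i k ≤ c := (rf_char hf h hki h4).2 le_rfl
    have h2 : f i 1 + (k - 1) ≤ f i k := mt_gap hf le_rfl h hki h4
    have h3 := (hf.1 i 1 le_rfl (by omega) h4).1
    omega

theorem rf_lb (hf : IsMT m N f) {i c : ℕ} (h4 : i ≤ m) (hc : c ≤ N) :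
    i ≤ rf f i c + (N - c) := by
  set k := rf f i c with hk
  rcases Nat.lt_or_ge k i with h | h
  · have h1 : 1 ≤ i := by omega
    have h2 : ¬ f i (k+1) ≤ c := fun hcon => by
      have := (rf_char hf (by omega) (by omega) h4).1 hcon; omega
    have h3 : f i (k+1) + (i - (k+1)) ≤ f i i := mt_gap hf (by omega) (by omega) le_rfl h4
    have h5 := (hf.1 i i h1 le_rfl h4).2
    omega
  · omega

theorem rf_col_step (hf : IsMT m N f) {i c : ℕ} (h4 : i ≤ m) :
    rf f i c ≤ rf f i (c+1) ∧ rf f i (c+1) ≤ rf f i c + 1 := by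
  constructor
  · apply Finset.card_le_card
    intro j hj
    obtain ⟨hj1, hj2⟩ := Finset.mem_filter.1 hj
    exact Finset.mem_filter.2 ⟨hj1, by omega⟩
  · set k' := rf f i (c+1) with hk'
    rcases Nat.lt_or_ge k' 2 with h | h
    · have : 0 ≤ rf f i c := Nat.zero_le _
      omega
    · have hki : k' ≤ i := rf_le hf (c+1) h4
      have h1 : f i k' ≤ c + 1 := (rf_char hf (by omega) hki h4).2 le_rfl
      have h2 : f i (k'-1) + (k' - (k'-1)) ≤ f i k' := mt_gap hf (by omega) (by omega) hki h4
      have h3 : f i (k'-1) ≤ c := by omega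
      have := (rf_char hf (show 1 ≤ k'-1 by omega) (by omega) h4).1 h3
      omega

theorem rf_row_step (hf : IsMT m N f) {i c : ℕ} (h1 : 1 ≤ i) (h4 : i ≤ m) :
    rf f (i-1) c ≤ rf f i c ∧ rf f i c ≤ rf f (i-1) c + 1 := by
  constructor
  · set k := rf f (i-1) c with hk
    rcases Nat.eq_zero_or_pos k with h | h
    · omega
    · have hki : k ≤ i - 1 := rf_le hf c (by omega)
      have hfk : f (i-1) k ≤ c := (rf_char hf h hki (by omega)).2 le_rfl
      have hle : f i k ≤ f (i-1) k := (hf.2.1 i k h (by omega) h4).1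
      exact (rf_char hf h (by omega) h4).1 (le_trans hle hfk)
  · set k' := rf f i c with hk'
    rcases Nat.lt_or_ge k' 2 with h | h
    · have : 0 ≤ rf f (i-1) c := Nat.zero_le _
      omega
    · have hki : k' ≤ i := rf_le hf c h4
      have hfk : f i k' ≤ c := (rf_char hf (by omega) hki h4).2 le_rfl
      have hle : f (i-1) (k'-1) ≤ f i (k'-1+1) := (hf.2.1 i (k'-1) (by omega) (by omega) h4).2
      rw [show k'-1+1 = k' by omega] at hle
      have := (rf_char hf (show 1 ≤ k'-1 by omega) (show k'-1 ≤ i-1 by omega)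
        (show i-1 ≤ m by omega)).1 (le_trans hle hfk)
      omega

theorem rf_mem (hf : IsMT m N f) {i c : ℕ} (h1 : 1 ≤ c) (h4 : i ≤ m) :
    rf f i c = rf f i (c-1) + 1 ↔ ∃ j, 1 ≤ j ∧ j ≤ i ∧ f i j = c := by
  have hstep := rf_col_step hf (c := c-1) h4
  rw [show c-1+1 = c by omega] at hstep
  constructor
  · intro h
    set j := rf f i c with hj
    have hj1 : 1 ≤ j := by omega
    have hji : j ≤ i := rf_le hf c h4
    refine ⟨j, hj1, hji, ?_⟩
    have hle : f i j ≤ c := (rf_char hf hj1 hji h4).2 le_rfl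
    have hgt : ¬ f i j ≤ c - 1 := fun hcon => by
      have := (rf_char hf hj1 hji h4 (c := c-1)).1 hcon
      omega
    omega
  · intro ⟨j, hj1, hji, hfj⟩
    have h2 : j ≤ rf f i c := (rf_char hf hj1 hji h4).1 (le_of_eq hfj)
    have h3 : ¬ j ≤ rf f i (c-1) := fun hcon => by
      have := (rf_char hf hj1 hji h4).2 hcon
      omega
    omega

end B4
section B5

theorem colSum_rk {n : ℕ} (A : Matrix (Fin n) (Fin n) ℤ) {i c : ℕ} (h1 : 1 ≤ c) (h2 : c ≤ n) :
    colSum n A i c = rk n A i c - rk n A i (c-1) := by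
  obtain ⟨d, rfl⟩ : ∃ d, c = d + 1 := ⟨c-1, by omega⟩
  have hc : d < n := by omega
  rw [show d+1-1 = d by omega, rk_succ_col n A i d hc]
  unfold colSum
  have key : ∀ p : Fin n, (∑ q : Fin n, if p.1 < i ∧ q.1 + 1 = d+1 then A p q else 0)
      = if p.1 < i then A p ⟨d, hc⟩ else 0 := by
    intro p
    have : ∀ q : Fin n, (if p.1 < i ∧ q.1 + 1 = d+1 then A p q else 0)
        = if q = ⟨d, hc⟩ then (if p.1 < i then A p q else 0) else 0 := by
      intro q
      rcases eq_or_ne q ⟨d, hc⟩ with h | h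
      · subst h; simp
      · have : q.1 ≠ d := fun hh => h (Fin.ext hh)
        simp only [h, if_false]
        split_ifs with hh
        · omega
        · rfl
    rw [Finset.sum_congr rfl fun q _ => this q,
      Finset.sum_ite_eq' Finset.univ ⟨d, hc⟩ (fun q => if p.1 < i then A p q else 0)]
    simp
  rw [Finset.sum_congr rfl fun p _ => key p]
  omega

/-- the rank function of the unique extension of the triangle -/
def Rof (m : ℕ) (f : ℕ → ℕ → ℕ) : ℕ → ℕ → ℤ :=
  fun i c => if i ≤ m then (rf f i c : ℤ) else min ((rf f m c : ℤ) + (i - m : ℕ)) c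

variable {n m : ℕ} {f : ℕ → ℕ → ℕ}

theorem Rof_formula (hf : IsMT m n f) {i c : ℕ} (hi : m ≤ i) :
    Rof m f i c = min ((rf f m c : ℤ) + (i - m : ℕ)) c := by
  unfold Rof
  rcases Nat.lt_or_ge m i with h | h
  · rw [if_neg (by omega)]
  · have him : i = m := by omega
    rw [if_pos h, him]
    have h1 : rf f m c ≤ c := rf_le_c hf le_rfl
    omega

theorem goodR_Rof (hf : IsMT m n f) (hmn : m < n) : GoodR n (Rof m f) := by
  have hle_c : ∀ c, (rf f m c : ℤ) ≤ c := fun c => by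
    have := rf_le_c hf (c := c) le_rfl; omega
  refine ⟨?_, ?_, ?_, ?_, ?_, ?_⟩
  · intro c _
    unfold Rof
    rw [if_pos (Nat.zero_le m)]
    simp [rf]
  · intro i _
    unfold Rof
    have h0 : rf f m 0 = 0 := rf_zero hf le_rfl
    split_ifs with h
    · rw [rf_zero hf h]; rfl
    · rw [h0]; omega
  · intro i hi c hc
    rcases Nat.lt_or_ge i m with h | h
    · unfold Rof
      rw [if_pos (by omega : i + 1 ≤ m), if_pos (by omega : i ≤ m)]
      have := rf_row_step hf (i := i+1) (c := c) (by omega) (by omega)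
      rw [show i+1-1 = i by omega] at this
      omega
    · rw [Rof_formula hf (by omega), Rof_formula hf h]
      have := hle_c c
      omega
  · intro c hc i hi
    have hstep := rf_col_step hf (i := m) (c := c) le_rfl
    rcases le_or_gt i m with h | h
    · unfold Rof
      rw [if_pos h, if_pos h]
      have := rf_col_step hf (i := i) (c := c) h
      omega
    · rw [Rof_formula hf (by omega), Rof_formula hf (by omega)]
      omega
  · intro i hi
    rcases le_or_gt i m with h | h
    · unfold Rof
      rw [if_pos h, rf_full hf h le_rfl]
    · rw [Rof_formula hf (by omega), rf_full hf le_rfl le_rfl]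
      omega
  · intro c hc
    rw [Rof_formula hf (by omega)]
    have h1 := hle_c c
    have h2 := rf_lb hf (i := m) (c := c) le_rfl hc
    omega

end B5
section B6

theorem part2_exist {n t : ℕ} (ht1 : 1 ≤ t) (htn : t ≤ n) {f : ℕ → ℕ → ℕ}
    (hf : IsMT (t-1) n f) :
    InASMI n (Finset.Icc t (n-1)) (matOfR n (Rof (t-1) f))
      ∧ Corr n t (matOfR n (Rof (t-1) f)) f := by
  set m := t - 1 with hm
  have hmn : m < n := by omega
  have hR := goodR_Rof hf hmn
  have hasm := isASM_matOfR hR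
  set A := matOfR n (Rof m f) with hA
  refine ⟨⟨hasm, ?_⟩, ?_⟩
  · intro i hi j hj1 hjn
    simp only [Finset.mem_Icc] at hi
    have hi1 : m ≤ i - 1 := by omega
    rw [rk_matOfR hR (by omega) hjn, rk_matOfR hR (by omega) hjn, rk_matOfR hR (by omega) hjn,
      Rof_formula hf (by omega), Rof_formula hf hi1, Rof_formula hf (by omega)]
    have h1 : (rf f m j : ℤ) ≤ j := by have := rf_le_c hf (c := j) le_rfl; omega
    omega
  · intro i hi1 him c hc1 hcn
    rw [colSum_rk A hc1 hcn, rk_matOfR hR (by omega) hcn, rk_matOfR hR (by omega) (by omega)]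
    unfold Rof
    rw [if_pos (show i ≤ m by omega), if_pos (show i ≤ m by omega)]
    rw [← rf_mem hf hc1 (by omega)]
    constructor <;> intro h <;> omega

end B6
section B7

theorem bridge {n t : ℕ} (htn : t ≤ n) {A : Matrix (Fin n) (Fin n) ℤ} (hA : IsASM n A)
    {f : ℕ → ℕ → ℕ} (hf : IsMT (t-1) n f) (hc : Corr n t A f) :
    ∀ i, i ≤ t-1 → ∀ c, c ≤ n → rk n A i c = rf f i c := by
  intro i hi c
  induction c with
  | zero =>
    intro _
    rw [rk_zero_right, rf_zero hf hi]
    simp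
  | succ d ih =>
    intro hdn
    rcases Nat.eq_zero_or_pos i with h0 | h1
    · subst h0
      rw [rk_zero_left]
      simp [rf]
    · have hcs := colSum_rk A (i := i) (show 1 ≤ d+1 by omega) hdn
      rw [show d+1-1 = d by omega] at hcs
      have hiff := hc i h1 hi (d+1) (by omega) hdn
      have hstep := rk_col_step hA (show d < n by omega) (show i ≤ n by omega)
      have hmem := rf_mem hf (show 1 ≤ d+1 by omega) hi
      rw [show d+1-1 = d by omega] at hmem
      have hrfstep := rf_col_step hf (i := i) (c := d) hi
      have ihd := ih (by omega)
      rcases Classical.em (∃ j, 1 ≤ j ∧ j ≤ i ∧ f i j = d+1) with hex | hex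
      · have h1' := hiff.2 hex
        have h2' := hmem.2 hex
        omega
      · have h1' : colSum n A i (d+1) ≠ 1 := fun hcon => hex (hiff.1 hcon)
        have h2' : rf f i (d+1) ≠ rf f i d + 1 := fun hcon => hex (hmem.1 hcon)
        omega

theorem triangle_ext {n m : ℕ} {f g : ℕ → ℕ → ℕ} (hf : IsMT m n f) (hg : IsMT m n g)
    (h : ∀ i, i ≤ m → ∀ c, c ≤ n → rf f i c = rf g i c) : f = g := by
  funext i j
  by_cases hr : 1 ≤ j ∧ j ≤ i ∧ i ≤ m
  · obtain ⟨h1, h2, h3⟩ := hr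
    have hfb := (hf.1 i j h1 h2 h3).2
    have hgb := (hg.1 i j h1 h2 h3).2
    have e1 : f i j ≤ g i j :=
      (rf_char hf h1 h2 h3).2 (by
        rw [h i h3 (g i j) hgb]
        exact (rf_char hg h1 h2 h3).1 le_rfl)
    have e2 : g i j ≤ f i j :=
      (rf_char hg h1 h2 h3).2 (by
        rw [← h i h3 (f i j) hfb]
        exact (rf_char hf h1 h2 h3).1 le_rfl)
    omega
  · rw [hf.2.2.2 i j hr, hg.2.2.2 i j hr]

theorem rk_forced {n t : ℕ} (ht1 : 1 ≤ t) (htn : t ≤ n) {A : Matrix (Fin n) (Fin n) ℤ}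
    (hA : InASMI n (Finset.Icc t (n-1)) A) :
    ∀ i, t ≤ i → i ≤ n → ∀ c, 1 ≤ c → c ≤ n →
      rk n A i c = min (rk n A (i-1) c + 1) (c : ℤ) := by
  obtain ⟨hasm, hcond⟩ := hA
  have main : ∀ d i, n - d ≤ i → t ≤ i → i ≤ n → ∀ c, 1 ≤ c → c ≤ n →
      rk n A i c = min (rk n A (i-1) c + 1) (c : ℤ) := by
    intro d
    induction d with
    | zero =>
      intro i h1 h2 h3 c hc1 hc2
      have hin : i = n := by omega
      subst hin
      have e1 := rk_last_row hasm hc2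
      have e2 := rk_lb_row hasm (show i-1 ≤ i by omega) hc2
      have e3 : (i - (i-1) : ℕ) = 1 := by omega
      rw [e3] at e2
      rw [e1]
      omega
    | succ k ih =>
      intro i h1 h2 h3 c hc1 hc2
      rcases le_or_gt (n - k) i with h | h
      · exact ih i h h2 h3 c hc1 hc2
      · have hin : i < n := by omega
        have hIc : i ∈ Finset.Icc t (n-1) := Finset.mem_Icc.2 ⟨h2, by omega⟩
        have hd := hcond i hIc c hc1 hc2
        have hub : rk n A i c ≤ c := rk_le_j hasm (by omega) hc2
        have hstep := (rk_mono_row hasm (show i-1 ≤ i by omega) (by omega) hc2).2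
        rw [show (i - (i-1) : ℕ) = 1 by omega] at hstep
        have hmono := (rk_mono_row hasm (show i-1 ≤ i by omega) (by omega) hc2).1
        rcases hd with h' | h'
        · omega
        · have hih := ih (i+1) (by omega) (by omega) (by omega) c hc1 hc2
          rw [show i+1-1 = i by omega] at hih
          omega
  intro i h1 h2
  exact main n i (by omega) h1 h2

theorem rk_formula_high {n t : ℕ} (ht1 : 1 ≤ t) (htn : t ≤ n) {A : Matrix (Fin n) (Fin n) ℤ}
    (hA : InASMI n (Finset.Icc t (n-1)) A) :
    ∀ i, t-1 ≤ i → i ≤ n → ∀ c, 1 ≤ c → c ≤ n →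
      rk n A i c = min (rk n A (t-1) c + ((i - (t-1) : ℕ) : ℤ)) (c : ℤ) := by
  have hforced := rk_forced ht1 htn hA
  intro i hti
  induction i, hti using Nat.le_induction with
  | base =>
    intro _ c hc1 hc2
    have hub : rk n A (t-1) c ≤ c := rk_le_j hA.1 (by omega) hc2
    omega
  | succ i hi ih =>
    intro hin c hc1 hc2
    have hih := ih (by omega) c hc1 hc2
    have hf := hforced (i+1) (by omega) hin c hc1 hc2
    rw [show i+1-1 = i by omega] at hf
    omega

theorem part2_unique {n t : ℕ} (ht1 : 1 ≤ t) (htn : t ≤ n)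
    {A A' : Matrix (Fin n) (Fin n) ℤ} {f : ℕ → ℕ → ℕ} (hf : IsMT (t-1) n f)
    (hA : InASMI n (Finset.Icc t (n-1)) A) (hc : Corr n t A f)
    (hA' : InASMI n (Finset.Icc t (n-1)) A') (hc' : Corr n t A' f) : A = A' := by
  apply ext_of_rk
  intro i c hin hcn
  rcases Nat.eq_zero_or_pos c with h0 | h1
  · subst h0; rw [rk_zero_right, rk_zero_right]
  rcases le_or_gt i (t-1) with h | h
  · rw [bridge htn hA.1 hf hc i h c hcn, bridge htn hA'.1 hf hc' i h c hcn]
  · have e1 := rk_formula_high ht1 htn hA i (by omega) hin c h1 hcn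
    have e2 := rk_formula_high ht1 htn hA' i (by omega) hin c h1 hcn
    have e3 := bridge htn hA.1 hf hc (t-1) le_rfl c hcn
    have e4 := bridge htn hA'.1 hf hc' (t-1) le_rfl c hcn
    omega

end B7
section B8

/-- the `j`-th smallest column with partial column sum `1` down to row `i` -/
noncomputable def cval (n : ℕ) (A : Matrix (Fin n) (Fin n) ℤ) (i j : ℕ) : ℕ :=
  sInf {c : ℕ | (j : ℤ) ≤ rk n A i c}

/-- the triangle associated to an ASM -/
noncomputable def fOf (n m : ℕ) (A : Matrix (Fin n) (Fin n) ℤ) : ℕ → ℕ → ℕ :=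
  fun i j => if 1 ≤ j ∧ j ≤ i ∧ i ≤ m then cval n A i j else 0

variable {n : ℕ} {A : Matrix (Fin n) (Fin n) ℤ}

theorem cval_n_mem (hA : IsASM n A) {i j : ℕ} (hji : j ≤ i) (hin : i ≤ n) :
    n ∈ {c : ℕ | (j : ℤ) ≤ rk n A i c} := by
  have := rk_last_col hA hin
  simp only [Set.mem_setOf_eq, this]
  omega

theorem cval_le_n (hA : IsASM n A) {i j : ℕ} (hji : j ≤ i) (hin : i ≤ n) :
    cval n A i j ≤ n := Nat.sInf_le (cval_n_mem hA hji hin)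

theorem cval_mem (hA : IsASM n A) {i j : ℕ} (hji : j ≤ i) (hin : i ≤ n) :
    (j : ℤ) ≤ rk n A i (cval n A i j) :=
  Nat.sInf_mem (Set.nonempty_of_mem (cval_n_mem hA hji hin))

theorem cval_pos (hA : IsASM n A) {i j : ℕ} (hj1 : 1 ≤ j) (hji : j ≤ i) (hin : i ≤ n) :
    1 ≤ cval n A i j := by
  rcases Nat.eq_zero_or_pos (cval n A i j) with h | h
  · have := cval_mem hA hji hin
    rw [h, rk_zero_right] at this
    omega
  · exact h

theorem cval_char (hA : IsASM n A) {i j c : ℕ} (hji : j ≤ i) (hin : i ≤ n) (hcn : c ≤ n) :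
    cval n A i j ≤ c ↔ (j : ℤ) ≤ rk n A i c := by
  constructor
  · intro h
    have h2 := (rk_mono_col hA h hcn hin).1
    have := cval_mem hA hji hin
    omega
  · exact fun h => Nat.sInf_le h

theorem cval_exact (hA : IsASM n A) {i j : ℕ} (hj1 : 1 ≤ j) (hji : j ≤ i) (hin : i ≤ n) :
    rk n A i (cval n A i j) = j := by
  set c0 := cval n A i j with hc0
  have h1 := cval_mem hA hji hin
  have hp := cval_pos hA hj1 hji hin
  have hn := cval_le_n hA hji hin
  rw [← hc0] at h1 hp hn
  have h2 : ¬ (j : ℤ) ≤ rk n A i (c0 - 1) := by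
    have : c0 - 1 ∉ {c : ℕ | (j : ℤ) ≤ rk n A i c} := by
      apply Nat.notMem_of_lt_sInf
      show c0 - 1 < cval n A i j
      omega
    simpa using this
  have h3 := (rk_mono_col hA (show c0 - 1 ≤ c0 by omega) hn hin).2
  rw [show (c0 - (c0-1) : ℕ) = 1 by omega] at h3
  omega

theorem part1_exist {n t : ℕ} (ht1 : 1 ≤ t) (htn : t ≤ n) {A : Matrix (Fin n) (Fin n) ℤ}
    (hA : IsASM n A) : IsMT (t-1) n (fOf n (t-1) A) ∧ Corr n t A (fOf n (t-1) A) := by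
  set m := t - 1 with hm
  have hmn : m < n := by omega
  constructor
  · refine ⟨?_, ?_, ?_, ?_⟩
    · intro i j h1 h2 h3
      rw [fOf, if_pos ⟨h1, h2, h3⟩]
      exact ⟨cval_pos hA h1 h2 (by omega), cval_le_n hA h2 (by omega)⟩
    · intro i j h1 h2 h3
      have hin : i ≤ n := by omega
      have hi1 : 1 ≤ i := by omega
      rw [fOf, fOf, fOf, if_pos ⟨h1, by omega, h3⟩, if_pos ⟨h1, by omega, by omega⟩,
        if_pos ⟨by omega, by omega, h3⟩]
      constructor
      · rw [cval_char hA (by omega) hin (cval_le_n hA (show j ≤ i-1 by omega) (by omega))]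
        have h4 := cval_mem hA (show j ≤ i-1 by omega) (show i-1 ≤ n by omega)
        have h5 := (rk_mono_row hA (show i-1 ≤ i by omega) hin
          (cval_le_n hA (show j ≤ i-1 by omega) (by omega))).1
        omega
      · rw [cval_char hA (by omega) (by omega) (cval_le_n hA (show j+1 ≤ i by omega) hin)]
        have h4 := cval_mem hA (show j+1 ≤ i by omega) hin
        have h5 := (rk_mono_row hA (show i-1 ≤ i by omega) hin
          (cval_le_n hA (show j+1 ≤ i by omega) hin)).2
        rw [show (i - (i-1) : ℕ) = 1 by omega] at h5
        omega
    · intro i j h1 h2 h3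
      have hin : i ≤ n := by omega
      rw [fOf, fOf, if_pos ⟨h1, by omega, h3⟩, if_pos ⟨by omega, h2, h3⟩]
      have he : rk n A i (cval n A i j) = j := cval_exact hA h1 (by omega) hin
      by_contra hcon
      push_neg at hcon
      have := (cval_char hA (show j+1 ≤ i by omega) hin
        (cval_le_n hA (show j ≤ i by omega) hin)).1 hcon
      omega
    · intro i j hr
      rw [fOf, if_neg hr]
  · intro i hi1 him c hc1 hcn
    have hin : i ≤ n := by omega
    rw [colSum_rk A hc1 hcn]
    have hmono := rk_mono_col hA (show c-1 ≤ c by omega) hcn hin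
    have hstep := hmono.2
    rw [show (c - (c-1) : ℕ) = 1 by omega] at hstep
    constructor
    · intro h
      have hnn := rk_nonneg hA hin (show c-1 ≤ n by omega)
      set j := (rk n A i c).toNat with hj
      have hjv : (j : ℤ) = rk n A i c := by omega
      have hj1 : 1 ≤ j := by omega
      have hji : j ≤ i := by
        have := rk_le_i hA hin hcn
        omega
      refine ⟨j, hj1, hji, ?_⟩
      rw [fOf, if_pos ⟨hj1, hji, him⟩]
      have ha : cval n A i j ≤ c := (cval_char hA hji hin hcn).2 (by omega)
      have hb : ¬ cval n A i j ≤ c - 1 := fun hcon => by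
        have := (cval_char hA hji hin (show c-1 ≤ n by omega)).1 hcon
        omega
      omega
    · rintro ⟨j, hj1, hji, hfj⟩
      rw [fOf, if_pos ⟨hj1, hji, him⟩] at hfj
      have ha : (j : ℤ) ≤ rk n A i c := by
        have := cval_mem hA hji hin
        rw [hfj] at this
        exact this
      have hb : ¬ (j : ℤ) ≤ rk n A i (c-1) := fun hcon => by
        have := (cval_char hA hji hin (show c-1 ≤ n by omega)).2 hcon
        omega
      omega

end B8

/-- For `I = {t, t+1, …, n-1}`, the map recording, for each `i ≤ t-1`, the columns whose
partial sum down to row `i` equals `1`, is a bijection from `ASM^I(n)` onto the set of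
monotone triangles of size `t-1` with entries in `{1,…,n}`. -/
theorem stmt14 (n : ℕ) (hn : 1 ≤ n) (t : ℕ) (ht1 : 1 ≤ t) (htn : t ≤ n)
    (I : Finset ℕ) (hI : I = Finset.Icc t (n - 1)) :
    (∀ A, InASMI n I A → ∃! f : ℕ → ℕ → ℕ, IsMT (t - 1) n f ∧ Corr n t A f) ∧
    (∀ f : ℕ → ℕ → ℕ, IsMT (t - 1) n f →
      ∃! A : Matrix (Fin n) (Fin n) ℤ, InASMI n I A ∧ Corr n t A f) := by
  subst hI
  constructor
  · intro A hA
    obtain ⟨hasm, -⟩ := hA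
    obtain ⟨hmt, hcorr⟩ := part1_exist ht1 htn hasm
    refine ⟨fOf n (t-1) A, ⟨hmt, hcorr⟩, ?_⟩
    rintro g ⟨hg, hgc⟩
    apply triangle_ext hg hmt
    intro i hi c hcn
    have e1 := bridge htn hasm hg hgc i hi c hcn
    have e2 := bridge htn hasm hmt hcorr i hi c hcn
    omega
  · intro f hf
    obtain ⟨hin, hcorr⟩ := part2_exist ht1 htn hf
    refine ⟨matOfR n (Rof (t-1) f), ⟨hin, hcorr⟩, ?_⟩
    rintro B ⟨hB, hBc⟩
    exact part2_unique ht1 htn hf hB hBc hin hcorr
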